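/- The number of pairs of surjections from $[m]$ and $[n]$ onto a common linearly ordered set, i.e., $\psi_{2+2}(m,n) = \sum_{j \ge 0} (j!)^2 S(m,j) S(n,j)$ where $S$ denotes Stirling numbers of the second kind, counts labeled height-2 bipartite posets on bottom set $[n]$ and top set $[m]$ that avoid $(2+2)$ and have no all-seeing vertices. -/

import Mathlib

/-- Stirling numbers of the second kind: `stirling n j` is the number of partitions
of an `n`-element set into `j` nonempty blocks. -/
def stirling : ℕ → ℕ → ℕ
  | 0, 0 => 1
  | 0, _ + 1 => 0
  | _ + 1, 0 => 0
  | n + 1, j + 1 => (j + 1) * stirling n (j + 1) + stirling n j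

open Finset Function



private def nsurj (n j : ℕ) : ℕ := (univ.filter fun f : Fin n → Fin j => Surjective f).card

private lemma image_succAbove {j : ℕ} (c : Fin (j+1)) :
    univ.image c.succAbove = univ.erase c := by
  ext x; simp [Fin.exists_succAbove_eq, eq_comm]

private lemma avoid_count (n j : ℕ) (c : Fin (j+1)) :
    (univ.filter fun g : Fin n → Fin (j+1) => univ.image g = univ.erase c).card = nsurj n j := by
  unfold nsurj
  symm
  apply Finset.card_bij (i := fun (g' : Fin n → Fin j) _ => c.succAbove ∘ g')
  · intro g' hg'
    simp only [mem_filter, mem_univ, true_and] at hg' ⊢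
    rw [← Finset.image_image, Finset.image_univ_of_surjective hg']
    exact image_succAbove c
  · intro g1 _ g2 _ h
    funext x
    exact Fin.succAbove_right_injective (congrFun h x)
  · intro g hg
    simp only [mem_filter, mem_univ, true_and] at hg
    have hne : ∀ x, g x ≠ c := fun x hx => by
      have h2 := mem_image_of_mem g (mem_univ x)
      rw [hg, hx] at h2; exact (mem_erase.mp h2).1 rfl
    choose g' hg' using fun x => Fin.exists_succAbove_eq (hne x)
    refine ⟨g', ?_, funext fun x => (hg' x)⟩
    simp only [mem_filter, mem_univ, true_and]
    intro y
    have h3 : c.succAbove y ∈ univ.image g := by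
      rw [hg]; exact mem_erase.mpr ⟨Fin.succAbove_ne c y, mem_univ _⟩
    obtain ⟨x, -, hx⟩ := mem_image.mp h3
    exact ⟨x, Fin.succAbove_right_injective (by rw [hg' x, hx])⟩

private lemma surj_cons_iff {n j : ℕ} (c : Fin (j+1)) (g : Fin n → Fin (j+1)) :
    Surjective (Fin.cons c g : Fin (n+1) → Fin (j+1)) ↔ univ.erase c ⊆ univ.image g := by
  constructor
  · intro h x hx
    obtain ⟨y, hy⟩ := h x
    rcases Fin.eq_zero_or_eq_succ y with rfl | ⟨i, rfl⟩
    · simp at hy; simp [hy] at hx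
    · simp only [Fin.cons_succ] at hy
      exact hy ▸ mem_image_of_mem g (mem_univ i)
  · intro h x
    by_cases hx : x = c
    · exact ⟨0, by simp [hx]⟩
    · obtain ⟨i, -, hi⟩ := mem_image.mp (h (mem_erase.mpr ⟨hx, mem_univ x⟩))
      exact ⟨i.succ, by simp [hi]⟩

private lemma cons_split {n j : ℕ} (c : Fin (j+1)) :
    (univ.filter fun g : Fin n → Fin (j+1) => Surjective (Fin.cons c g : Fin (n+1) → Fin (j+1)))
      = (univ.filter fun g => Surjective g) ∪ (univ.filter fun g => univ.image g = univ.erase c) := by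
  ext g
  simp only [mem_union, mem_filter, mem_univ, true_and, surj_cons_iff]
  constructor
  · intro h
    by_cases hc : c ∈ univ.image g
    · left
      intro y
      have : y ∈ univ.image g := by
        by_cases hy : y = c
        · exact hy ▸ hc
        · exact h (mem_erase.mpr ⟨hy, mem_univ y⟩)
      obtain ⟨x, -, hx⟩ := mem_image.mp this
      exact ⟨x, hx⟩
    · right
      apply Finset.Subset.antisymm
      · intro x hx
        obtain ⟨i, -, hi⟩ := mem_image.mp hx
        refine mem_erase.mpr ⟨?_, mem_univ x⟩
        rintro rfl; exact hc hx
      · exact h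
  · rintro (h | h)
    · intro x hx
      obtain ⟨y, hy⟩ := h x
      exact hy ▸ mem_image_of_mem g (mem_univ y)
    · rw [h]

private lemma nsurj_succ_succ (n j : ℕ) :
    nsurj (n+1) (j+1) = (j+1) * (nsurj n (j+1) + nsurj n j) := by
  have h1 : nsurj (n+1) (j+1)
      = (univ.filter fun p : Fin (j+1) × (Fin n → Fin (j+1)) =>
          Surjective (Fin.cons p.1 p.2 : Fin (n+1) → Fin (j+1))).card := by
    unfold nsurj
    apply Finset.card_bij' (i := fun f _ => ((f 0, Fin.tail f) : Fin (j+1) × (Fin n → Fin (j+1))))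
      (j := fun p _ => (Fin.cons p.1 p.2 : Fin (n+1) → Fin (j+1)))
    · intro f hf
      simp only [mem_filter, mem_univ, true_and] at hf ⊢
      rwa [Fin.cons_self_tail]
    · intro p hp
      simp only [mem_filter, mem_univ, true_and] at hp ⊢
      exact hp
    · intro f _
      simp [Fin.cons_self_tail]
    · intro p _
      simp [Fin.tail_cons]
  rw [h1, Finset.card_eq_sum_card_fiberwise (f := Prod.fst) (t := univ) (fun x _ => mem_univ _)]
  have h2 : ∀ c : Fin (j+1),
      ((univ.filter fun p : Fin (j+1) × (Fin n → Fin (j+1)) =>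
          Surjective (Fin.cons p.1 p.2 : Fin (n+1) → Fin (j+1))).filter
        fun p => p.1 = c).card = nsurj n (j+1) + nsurj n j := by
    intro c
    have himg : ((univ.filter fun p : Fin (j+1) × (Fin n → Fin (j+1)) =>
          Surjective (Fin.cons p.1 p.2 : Fin (n+1) → Fin (j+1))).filter fun p => p.1 = c)
        = (univ.filter fun g : Fin n → Fin (j+1) =>
            Surjective (Fin.cons c g : Fin (n+1) → Fin (j+1))).image (fun g => (c, g)) := by
      ext ⟨c', g⟩
      simp only [mem_filter, mem_univ, true_and, mem_image, Prod.mk.injEq]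
      constructor
      · rintro ⟨hs, rfl⟩; exact ⟨g, hs, rfl, rfl⟩
      · rintro ⟨g', hs, rfl, rfl⟩; exact ⟨hs, rfl⟩
    rw [himg, Finset.card_image_of_injective _ (fun g1 g2 h => (Prod.mk.injEq _ _ _ _).mp h |>.2),
      cons_split, Finset.card_union_of_disjoint, avoid_count]
    · rfl
    · rw [Finset.disjoint_filter]
      intro g _ hs h2
      have : univ.image g = univ := Finset.image_univ_of_surjective hs
      rw [this] at h2
      have := mem_erase.mp (h2 ▸ mem_univ c)
      exact this.1 rfl
  rw [Finset.sum_congr rfl (fun c _ => h2 c), Finset.sum_const, card_univ]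
  simp [mul_comm]

private lemma nsurj_eq (n : ℕ) : ∀ j, nsurj n j = j.factorial * stirling n j := by
  induction n with
  | zero =>
    intro j
    cases j with
    | zero =>
      have : (univ.filter fun f : Fin 0 → Fin 0 => Surjective f) = univ := by
        apply Finset.filter_true_of_mem
        intro f _ y
        exact y.elim0
      unfold nsurj
      rw [this]
      simp [stirling]
    | succ j =>
      have : (univ.filter fun f : Fin 0 → Fin (j+1) => Surjective f) = ∅ := by
        rw [Finset.eq_empty_iff_forall_notMem]
        intro f hf
        obtain ⟨x, -⟩ := (mem_filter.mp hf).2 0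
        exact x.elim0
      unfold nsurj
      rw [this]
      simp [stirling]
  | succ n ih =>
    intro j
    cases j with
    | zero =>
      have he : IsEmpty (Fin (n+1) → Fin 0) := ⟨fun f => (f 0).elim0⟩
      unfold nsurj
      rw [Finset.univ_eq_empty, Finset.filter_empty]
      simp [stirling]
    | succ j =>
      rw [nsurj_succ_succ, ih, ih, show stirling (n+1) (j+1) = (j+1) * stirling n (j+1) + stirling n j from rfl,
        Nat.factorial_succ]
      ring

private def rel {m n j : ℕ} (f : Fin m → Fin j) (g : Fin n → Fin j) : Finset (Fin n × Fin m) :=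
  univ.filter fun p => f p.2 < g p.1

private lemma mem_rel {m n j : ℕ} (f : Fin m → Fin j) (g : Fin n → Fin j) (b : Fin n) (t : Fin m) :
    (b, t) ∈ rel f g ↔ f t < g b := by simp [rel]

private def ups {m n : ℕ} (E : Finset (Fin n × Fin m)) (b : Fin n) : Finset (Fin m) :=
  univ.filter fun t => (b, t) ∈ E

private lemma mem_ups {m n : ℕ} (E : Finset (Fin n × Fin m)) (b : Fin n) (t : Fin m) :
    t ∈ ups E b ↔ (b, t) ∈ E := by simp [ups]

private def ubelow {m j : ℕ} (f : Fin m → Fin j) (i : Fin j) : Finset (Fin m) :=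
  univ.filter fun t => f t < i

private lemma ups_rel {m n j : ℕ} (f : Fin m → Fin j) (g : Fin n → Fin j) (b : Fin n) :
    ups (rel f g) b = ubelow f (g b) := by
  ext t; simp [ups, rel, ubelow]

private lemma ubelow_ssubset {m j : ℕ} {f : Fin m → Fin j} (hf : Surjective f) {i i' : Fin j}
    (h : i < i') : ubelow f i ⊂ ubelow f i' := by
  have hsub : ubelow f i ⊆ ubelow f i' := by
    intro t ht
    simp only [ubelow, mem_filter, mem_univ, true_and] at ht ⊢
    exact lt_of_lt_of_le ht h.le
  rw [Finset.ssubset_iff_of_subset hsub]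
  obtain ⟨t0, ht0⟩ := hf i
  exact ⟨t0, by simp [ubelow, ht0, h], by simp [ubelow, ht0]⟩

private lemma ubelow_ssubset_iff {m j : ℕ} {f : Fin m → Fin j} (hf : Surjective f) {i i' : Fin j} :
    ubelow f i ⊂ ubelow f i' ↔ i < i' := by
  constructor
  · intro h
    rcases lt_or_ge i i' with h' | h'
    · exact h'
    · exfalso
      rcases lt_or_eq_of_le h' with h'' | rfl
      · exact ssubset_irrefl _ (h.trans (ubelow_ssubset hf h''))
      · exact ssubset_irrefl _ h
  · exact ubelow_ssubset hf

private lemma ubelow_inj {m j : ℕ} {f : Fin m → Fin j} (hf : Surjective f) :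
    Injective (ubelow f) := by
  intro i i' h
  by_contra hne
  rcases lt_or_gt_of_ne hne with h' | h'
  · exact (ubelow_ssubset hf h').ne h
  · exact (ubelow_ssubset hf h').ne h.symm

private lemma image_ups {m n j : ℕ} (f : Fin m → Fin j) {g : Fin n → Fin j} (hg : Surjective g) :
    univ.image (ups (rel f g)) = univ.image (ubelow f) := by
  ext A
  simp only [mem_image, mem_univ, true_and]
  constructor
  · rintro ⟨b, rfl⟩; exact ⟨g b, (ups_rel f g b).symm⟩
  · rintro ⟨i, rfl⟩
    obtain ⟨b, rfl⟩ := hg i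
    exact ⟨b, ups_rel f g b⟩

private lemma recover_card {m n j : ℕ} {f : Fin m → Fin j} {g : Fin n → Fin j}
    (hf : Surjective f) (hg : Surjective g) :
    (univ.image (ups (rel f g))).card = j := by
  rw [image_ups f hg, Finset.card_image_of_injective _ (ubelow_inj hf), card_univ, Fintype.card_fin]

private lemma recover_g {m n j : ℕ} {f : Fin m → Fin j} {g : Fin n → Fin j}
    (hf : Surjective f) (hg : Surjective g) (b : Fin n) :
    ((univ.image (ups (rel f g))).filter (· ⊂ ups (rel f g) b)).card = (g b : ℕ) := by
  rw [image_ups f hg, ups_rel]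
  have h : (univ.image (ubelow f)).filter (· ⊂ ubelow f (g b))
      = (univ.filter fun i => i < g b).image (ubelow f) := by
    ext A
    simp only [mem_filter, mem_image, mem_univ, true_and]
    constructor
    · rintro ⟨⟨i, rfl⟩, hlt⟩
      exact ⟨i, (ubelow_ssubset_iff hf).mp hlt, rfl⟩
    · rintro ⟨i, hlt, rfl⟩
      exact ⟨⟨i, rfl⟩, ubelow_ssubset hf hlt⟩
  rw [h, Finset.card_image_of_injective _ (ubelow_inj hf),
    show (univ.filter fun i : Fin j => i < g b) = Finset.Iio (g b) by ext i; simp,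
    Fin.card_Iio]

private lemma recover_f {m n j : ℕ} {f : Fin m → Fin j} {g : Fin n → Fin j}
    (hf : Surjective f) (hg : Surjective g) (t : Fin m) :
    ((univ.image (ups (rel f g))).filter (fun A => t ∉ A)).card = (f t : ℕ) + 1 := by
  rw [image_ups f hg]
  have h : (univ.image (ubelow f)).filter (fun A => t ∉ A)
      = (univ.filter fun i => i ≤ f t).image (ubelow f) := by
    ext A
    simp only [mem_filter, mem_image, mem_univ, true_and]
    constructor
    · rintro ⟨⟨i, rfl⟩, ht⟩
      refine ⟨i, ?_, rfl⟩
      by_contra hcon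
      push_neg at hcon
      exact ht (by simp [ubelow, hcon])
    · rintro ⟨i, hle, rfl⟩
      refine ⟨⟨i, rfl⟩, ?_⟩
      simp only [ubelow, mem_filter, mem_univ, true_and, not_lt]
      exact hle
  rw [h, Finset.card_image_of_injective _ (ubelow_inj hf),
    show (univ.filter fun i : Fin j => i ≤ f t) = Finset.Iic (f t) by ext i; simp,
    Fin.card_Iic]


/-- The number of labeled height-2 bipartite posets on bottom `[n]` and top `[m]` that
avoid `(2+2)` (up-sets of bottom vertices form a chain under inclusion) and have no
all-seeing vertices equals `ψ_{2+2}(m,n) = ∑_j (j!)² S(m,j) S(n,j)`. -/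
theorem labeled_faceoff_count (m n : ℕ) :
    (Finset.univ.filter (fun E : Finset (Fin n × Fin m) =>
        (∀ b b' : Fin n, (∀ t, (b, t) ∈ E → (b', t) ∈ E) ∨ (∀ t, (b', t) ∈ E → (b, t) ∈ E)) ∧
        (∀ b : Fin n, ∃ t : Fin m, (b, t) ∉ E) ∧
        (∀ t : Fin m, ∃ b : Fin n, (b, t) ∉ E))).card
    = ∑ j ∈ Finset.range (min m n + 1), (j.factorial) ^ 2 * stirling m j * stirling n j := by
  have hterm : ∀ j, (j.factorial) ^ 2 * stirling m j * stirling n j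
      = ((univ.filter fun f : Fin m → Fin j => Surjective f) ×ˢ
         (univ.filter fun g : Fin n → Fin j => Surjective g)).card := by
    intro j
    rw [Finset.card_product]
    show _ = nsurj m j * nsurj n j
    rw [nsurj_eq, nsurj_eq]
    ring
  rw [Finset.sum_congr rfl fun j _ => hterm j, ← Finset.card_sigma]
  refine (Finset.card_bij
    (i := fun (a : (j : ℕ) × ((Fin m → Fin j) × (Fin n → Fin j))) _ => rel a.2.1 a.2.2)
    ?_ ?_ ?_).symm
  · -- maps into the filter
    rintro ⟨j, f, g⟩ ha
    simp only [Finset.mem_sigma, Finset.mem_range, Finset.mem_product, mem_filter, mem_univ,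
      true_and] at ha
    obtain ⟨-, hf, hg⟩ := ha
    simp only [mem_filter, mem_univ, true_and]
    refine ⟨?_, ?_, ?_⟩
    · intro b b'
      rcases le_total (g b) (g b') with h | h
      · left; intro t ht; rw [mem_rel] at ht ⊢; exact lt_of_lt_of_le ht h
      · right; intro t ht; rw [mem_rel] at ht ⊢; exact lt_of_lt_of_le ht h
    · intro b
      obtain ⟨t, ht⟩ := hf (g b)
      exact ⟨t, by rw [mem_rel, ht]; exact lt_irrefl _⟩
    · intro t
      obtain ⟨b, hb⟩ := hg (f t)
      exact ⟨b, by rw [mem_rel, hb]; exact lt_irrefl _⟩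
  · -- injectivity
    rintro ⟨j1, f1, g1⟩ h1 ⟨j2, f2, g2⟩ h2 heq
    simp only [Finset.mem_sigma, Finset.mem_range, Finset.mem_product, mem_filter, mem_univ,
      true_and] at h1 h2
    obtain ⟨-, hf1, hg1⟩ := h1
    obtain ⟨-, hf2, hg2⟩ := h2
    simp only at heq
    have hj : j1 = j2 := by
      have e1 := recover_card hf1 hg1
      have e2 := recover_card hf2 hg2
      rw [heq] at e1
      exact e1.symm.trans e2
    subst hj
    have hfe : f1 = f2 := by
      funext t
      have e1 := recover_f hf1 hg1 t
      have e2 := recover_f hf2 hg2 t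
      rw [heq] at e1
      exact Fin.ext (by omega)
    have hge : g1 = g2 := by
      funext b
      have e1 := recover_g hf1 hg1 b
      have e2 := recover_g hf2 hg2 b
      rw [heq] at e1
      exact Fin.ext (e1.symm.trans e2)
    rw [hfe, hge]
  · -- surjectivity
    intro E hE
    simp only [mem_filter, mem_univ, true_and] at hE
    obtain ⟨h1, h2, h3⟩ := hE
    set S0 := univ.image (ups E) with hS0
    set k := S0.card with hk
    have hups_mem : ∀ b, ups E b ∈ S0 := fun b => mem_image_of_mem _ (mem_univ b)
    have hcomp : ∀ A ∈ S0, ∀ B ∈ S0, A ⊆ B ∨ B ⊆ A := by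
      intro A hA B hB
      obtain ⟨b, -, rfl⟩ := mem_image.mp hA
      obtain ⟨b', -, rfl⟩ := mem_image.mp hB
      rcases h1 b b' with h | h
      · left; intro t ht; rw [mem_ups] at ht ⊢; exact h t ht
      · right; intro t ht; rw [mem_ups] at ht ⊢; exact h t ht
    have hne_univ : ∀ A ∈ S0, A ≠ univ := by
      intro A hA hAu
      obtain ⟨b, -, rfl⟩ := mem_image.mp hA
      obtain ⟨t, ht⟩ := h2 b
      exact ht ((mem_ups E b t).mp (hAu ▸ mem_univ t))
    have hrank_lt : ∀ A ∈ S0, (S0.filter (· ⊂ A)).card < k := by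
      intro A hA
      calc (S0.filter (· ⊂ A)).card ≤ (S0.erase A).card := by
            apply card_le_card
            intro B hB
            exact mem_erase.mpr ⟨(mem_filter.mp hB).2.ne, (mem_filter.mp hB).1⟩
        _ < k := card_erase_lt_of_mem hA
    set G : Fin n → Fin k := fun b => ⟨(S0.filter (· ⊂ ups E b)).card, hrank_lt _ (hups_mem b)⟩
      with hG
    have hcnt_pos : ∀ t : Fin m, 0 < (S0.filter (fun A => t ∉ A)).card := by
      intro t
      obtain ⟨b, hb⟩ := h3 t
      refine card_pos.mpr ⟨ups E b, mem_filter.mpr ⟨hups_mem b, ?_⟩⟩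
      rw [mem_ups]; exact hb
    have hcnt_le : ∀ t : Fin m, (S0.filter (fun A => t ∉ A)).card ≤ k :=
      fun t => card_le_card (filter_subset _ _)
    set F : Fin m → Fin k := fun t => ⟨(S0.filter (fun A => t ∉ A)).card - 1, by
      have := hcnt_pos t; have := hcnt_le t; omega⟩ with hF
    have hiff : ∀ b t, (b, t) ∈ E ↔ F t < G b := by
      intro b t
      by_cases hbt : (b, t) ∈ E
      · simp only [hbt, true_iff]
        have hsub : S0.filter (fun A => t ∉ A) ⊆ S0.filter (· ⊂ ups E b) := by
          intro A hA
          obtain ⟨hA0, htA⟩ := mem_filter.mp hA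
          refine mem_filter.mpr ⟨hA0, ?_⟩
          rcases hcomp A hA0 _ (hups_mem b) with h | h
          · refine ssubset_of_subset_of_ne h ?_
            rintro rfl
            exact htA ((mem_ups E b t).mpr hbt)
          · exact absurd (h ((mem_ups E b t).mpr hbt)) htA
        have hcc := card_le_card hsub
        have hp := hcnt_pos t
        simp only [hF, hG, Fin.mk_lt_mk]
        omega
      · simp only [hbt, false_iff]
        have hsub : S0.filter (· ⊂ ups E b) ⊂ S0.filter (fun A => t ∉ A) := by
          rw [Finset.ssubset_iff_of_subset ?_]
          · refine ⟨ups E b, mem_filter.mpr ⟨hups_mem b, fun hc => hbt ((mem_ups E b t).mp hc)⟩,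
              fun hc => ssubset_irrefl _ (mem_filter.mp hc).2⟩
          · intro A hA
            obtain ⟨hA0, hAs⟩ := mem_filter.mp hA
            refine mem_filter.mpr ⟨hA0, fun htA => ?_⟩
            exact hbt ((mem_ups E b t).mp (hAs.subset htA))
        have hcc := card_lt_card hsub
        simp only [hF, hG, Fin.mk_lt_mk]
        omega
    have hrank_inj : ∀ A ∈ S0, ∀ B ∈ S0,
        (S0.filter (· ⊂ A)).card = (S0.filter (· ⊂ B)).card → A = B := by
      have key : ∀ X ∈ S0, ∀ Y, X ⊂ Y →
          (S0.filter (· ⊂ X)).card < (S0.filter (· ⊂ Y)).card := by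
        intro X hX Y hXY
        apply card_lt_card
        rw [Finset.ssubset_iff_of_subset ?_]
        · exact ⟨X, mem_filter.mpr ⟨hX, hXY⟩, fun hc => ssubset_irrefl _ (mem_filter.mp hc).2⟩
        · intro C hC
          exact mem_filter.mpr ⟨(mem_filter.mp hC).1, (mem_filter.mp hC).2.trans hXY⟩
      intro A hA B hB hcard
      by_contra hne
      rcases hcomp A hA B hB with h | h
      · exact absurd hcard (Nat.ne_of_lt (key A hA B (ssubset_of_subset_of_ne h hne)))
      · exact absurd hcard (Nat.ne_of_gt (key B hB A (ssubset_of_subset_of_ne h (Ne.symm hne))))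
    have hGsurj : Surjective G := by
      intro y
      have hinj : Set.InjOn (fun A => (S0.filter (· ⊂ A)).card) S0 :=
        fun A hA B hB h => hrank_inj A hA B hB h
      have himg : S0.image (fun A => (S0.filter (· ⊂ A)).card) = Finset.range k := by
        apply Finset.eq_of_subset_of_card_le
        · intro x hx
          obtain ⟨A, hA, rfl⟩ := mem_image.mp hx
          exact mem_range.mpr (hrank_lt A hA)
        · rw [Finset.card_range, Finset.card_image_of_injOn hinj]
      have hy : (y : ℕ) ∈ S0.image (fun A => (S0.filter (· ⊂ A)).card) := by
        rw [himg]; exact mem_range.mpr y.isLt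
      obtain ⟨A, hA, hAy⟩ := mem_image.mp hy
      obtain ⟨b, -, rfl⟩ := mem_image.mp hA
      exact ⟨b, Fin.ext hAy⟩
    have hkey : ∀ A ∈ S0, ∃ t : Fin m, t ∉ A ∧ ∀ B ∈ S0, A ⊂ B → t ∈ B := by
      intro A hA
      by_cases hT : (S0.filter fun B => A ⊂ B).Nonempty
      · obtain ⟨C, hC, hCmin'⟩ := Finset.exists_minimal hT
        have hCmin : ∀ x ∈ (S0.filter fun B => A ⊂ B), ¬ x < C :=
          fun x hx hlt => lt_irrefl _ (hlt.trans_le (hCmin' hx hlt.le))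
        obtain ⟨hC0, hAC⟩ := mem_filter.mp hC
        obtain ⟨t, htC, htA⟩ := Finset.exists_of_ssubset hAC
        refine ⟨t, htA, fun B hB hAB => ?_⟩
        rcases hcomp B hB C hC0 with h | h
        · rcases h.ssubset_or_eq with hBC | rfl
          · exact absurd hBC (hCmin B (mem_filter.mpr ⟨hB, hAB⟩))
          · exact htC
        · exact h htC
      · obtain ⟨b, -, rfl⟩ := mem_image.mp hA
        obtain ⟨t, ht⟩ := h2 b
        exact ⟨t, fun hc => ht ((mem_ups E b t).mp hc),
          fun B hB hAB => absurd ⟨B, mem_filter.mpr ⟨hB, hAB⟩⟩ hT⟩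
    have hFsurj : Surjective F := by
      intro y
      obtain ⟨b, hb⟩ := hGsurj y
      obtain ⟨t, htA, htB⟩ := hkey (ups E b) (hups_mem b)
      refine ⟨t, ?_⟩
      have hD : S0.filter (fun A => t ∉ A) = insert (ups E b) (S0.filter (· ⊂ ups E b)) := by
        ext C
        simp only [mem_insert, mem_filter]
        constructor
        · rintro ⟨hC0, htC⟩
          rcases hcomp C hC0 _ (hups_mem b) with h | h
          · rcases h.ssubset_or_eq with h' | rfl
            · right; exact ⟨hC0, h'⟩
            · left; rfl
          · rcases h.ssubset_or_eq with h' | h'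
            · exact absurd (htB C hC0 h') htC
            · left; exact h'.symm
        · rintro (rfl | ⟨hC0, hsub⟩)
          · exact ⟨hups_mem b, htA⟩
          · exact ⟨hC0, fun htC => htA (hsub.subset htC)⟩
      have hnotmem : ups E b ∉ S0.filter (· ⊂ ups E b) :=
        fun hc => ssubset_irrefl _ (mem_filter.mp hc).2
      have hcard : (S0.filter fun A => t ∉ A).card = (S0.filter (· ⊂ ups E b)).card + 1 := by
        rw [hD, Finset.card_insert_of_notMem hnotmem]
      have hbv : (S0.filter (· ⊂ ups E b)).card = (y : ℕ) := congrArg Fin.val hb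
      apply Fin.ext
      simp only [hF]
      omega
    have hkn : k ≤ n := le_trans card_image_le (by rw [card_univ, Fintype.card_fin])
    have hkm : k ≤ m := by
      have := Finset.card_le_card_of_injOn (f := Finset.card) (t := Finset.range m)
        (s := S0) ?_ ?_
      · rwa [Finset.card_range] at this
      · intro A hA
        rw [Finset.mem_coe, mem_range]
        have : A ⊂ univ := ssubset_of_subset_of_ne (subset_univ A) (hne_univ A hA)
        have := card_lt_card this
        rwa [card_univ, Fintype.card_fin] at this
      · intro A hA B hB hcard
        rcases hcomp A hA B hB with h | h
        · exact Finset.eq_of_subset_of_card_le h (le_of_eq hcard.symm)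
        · exact (Finset.eq_of_subset_of_card_le h (le_of_eq hcard)).symm
    refine ⟨⟨k, (F, G)⟩, ?_, ?_⟩
    · simp only [Finset.mem_sigma, Finset.mem_range, Finset.mem_product, mem_filter, mem_univ,
        true_and]
      exact ⟨by omega, hFsurj, hGsurj⟩
    · ext ⟨b, t⟩
      show (b, t) ∈ rel F G ↔ (b, t) ∈ E
      rw [mem_rel]
      exact (hiff b t).symm
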